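/- (Antipodal chord length.) For every integer k ≥ 1 and every real θ, the antipodal difference vector d_k(θ) = x(θ) − x(θ+π) of the Fourier curve satisfies ‖d_k(θ)‖² = 4·⌈k/2⌉/k. -/

import Mathlib

open Real

/-- The Fourier curve `x(θ) = (1/√k)(cos θ, sin θ, cos 2θ, sin 2θ, …, cos kθ, sin kθ)`
in `ℝ^{2k}`: coordinate `2(m-1)` is `cos(mθ)/√k` and coordinate `2m-1` is `sin(mθ)/√k`. -/
noncomputable def fourierCurve (k : ℕ) (θ : ℝ) : EuclideanSpace ℝ (Fin (2 * k)) :=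
  WithLp.toLp 2 fun i => (Real.sqrt k)⁻¹ *
    (if (i : ℕ) % 2 = 0 then Real.cos ((((i : ℕ) / 2 + 1 : ℕ) : ℝ) * θ)
     else Real.sin ((((i : ℕ) / 2 + 1 : ℕ) : ℝ) * θ))

lemma cos_npi (n : ℕ) : Real.cos (n * Real.pi) = (-1)^n := by
  simpa using Real.cos_nat_mul_pi_sub 0 n

lemma sum_t (k : ℕ) (θ : ℝ) :
    ∑ i ∈ Finset.range (2*k),
      (if i % 2 = 0 then
        (Real.cos (((i/2+1:ℕ):ℝ)*θ) - Real.cos (((i/2+1:ℕ):ℝ)*(θ+Real.pi)))^2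
      else
        (Real.sin (((i/2+1:ℕ):ℝ)*θ) - Real.sin (((i/2+1:ℕ):ℝ)*(θ+Real.pi)))^2)
    = 4 * (((k+1)/2 : ℕ) : ℝ) := by
  induction k with
  | zero => simp
  | succ n ih =>
    rw [Nat.mul_succ, Finset.sum_range_succ, Finset.sum_range_succ, ih]
    have h0 : (2*n) % 2 = 0 := by omega
    have h1 : (2*n+1) % 2 = 1 := by omega
    have h2 : (2*n)/2 + 1 = n+1 := by omega
    have h3 : (2*n+1)/2 + 1 = n+1 := by omega
    rw [if_pos h0, if_neg (by omega), h2, h3]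
    have hm : ((n+1:ℕ):ℝ)*(θ+Real.pi) = ((n+1:ℕ):ℝ)*θ + (n+1:ℕ)*Real.pi := by ring
    rw [hm, Real.cos_add, Real.sin_add, cos_npi, Real.sin_nat_mul_pi]
    have key : (Real.cos (((n+1:ℕ):ℝ)*θ) - (Real.cos (((n+1:ℕ):ℝ)*θ) * (-1)^(n+1) - Real.sin (((n+1:ℕ):ℝ)*θ) * 0))^2
        + (Real.sin (((n+1:ℕ):ℝ)*θ) - (Real.sin (((n+1:ℕ):ℝ)*θ) * (-1)^(n+1) + Real.cos (((n+1:ℕ):ℝ)*θ) * 0))^2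
        = (1 - (-1)^(n+1))^2 := by
      have := Real.sin_sq_add_cos_sq (((n+1:ℕ):ℝ)*θ)
      nlinarith [this]
    rw [add_assoc, key]
    rcases Nat.even_or_odd n with ⟨j,hj⟩ | ⟨j,hj⟩ <;> subst hj
    · have : (-1:ℝ)^(j+j+1) = -1 := by
        rw [pow_succ, show j+j = 2*j by ring, pow_mul]; norm_num
      rw [this]
      have : (j+j+1+1)/2 = (j+j+1)/2 + 1 := by omega
      rw [this]
      push_cast
      ring
    · have : (-1:ℝ)^(2*j+1+1) = 1 := by
        rw [pow_succ, pow_succ, pow_mul]; norm_num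
      rw [this]
      have : (2*j+1+1+1)/2 = (2*j+1+1)/2 := by omega
      rw [this]
      ring

lemma ceil_half (k : ℕ) : (⌈(k : ℝ) / 2⌉ : ℝ) = (((k+1)/2 : ℕ) : ℝ) := by
  rcases Nat.even_or_odd k with ⟨m, hm⟩ | ⟨m, hm⟩
  · subst hm
    have : ((m+m:ℕ):ℝ)/2 = (m:ℝ) := by push_cast; ring
    rw [this]
    rw [Int.ceil_natCast]
    congr 1
    omega
  · subst hm
    have : ((2*m+1:ℕ):ℝ)/2 = (1:ℝ)/2 + (m:ℤ) := by push_cast; ring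
    rw [this, Int.ceil_add_intCast]
    have h2 : (2*m+1+1)/2 = m+1 := by omega
    have h3 : ⌈(1:ℝ)/2⌉ = 1 := by rw [Int.ceil_eq_iff] <;> norm_num
    rw [h2, h3]
    push_cast; ring

/-- antipodal chord length: `‖x(θ) − x(θ+π)‖² = 4⌈k/2⌉/k`. -/
theorem antipodal_chord_length (k : ℕ) (hk : 1 ≤ k) (θ : ℝ) :
    ‖fourierCurve k θ - fourierCurve k (θ + Real.pi)‖ ^ 2 =
      4 * (⌈(k : ℝ) / 2⌉ : ℝ) / (k : ℝ) := by
  have hk0 : (k:ℝ) ≠ 0 := by positivity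
  have hks : Real.sqrt k ≠ 0 := by positivity
  rw [EuclideanSpace.norm_eq, Real.sq_sqrt (by positivity)]
  have hterm : ∀ i : Fin (2*k),
      ‖(fourierCurve k θ - fourierCurve k (θ + Real.pi)) i‖^2
      = (k:ℝ)⁻¹ *
        (if (i:ℕ) % 2 = 0 then
          (Real.cos ((((i:ℕ)/2+1:ℕ):ℝ)*θ) - Real.cos ((((i:ℕ)/2+1:ℕ):ℝ)*(θ+Real.pi)))^2
        else
          (Real.sin ((((i:ℕ)/2+1:ℕ):ℝ)*θ) - Real.sin ((((i:ℕ)/2+1:ℕ):ℝ)*(θ+Real.pi)))^2) := by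
    intro i
    have : (fourierCurve k θ - fourierCurve k (θ + Real.pi)) i
        = fourierCurve k θ i - fourierCurve k (θ + Real.pi) i := rfl
    rw [this]
    unfold fourierCurve
    simp only [PiLp.toLp_apply]
    rw [Real.norm_eq_abs, sq_abs]
    split
    · rw [← mul_sub]
      rw [mul_pow, ← Real.sqrt_inv, Real.sq_sqrt (by positivity)]
    · rw [← mul_sub]
      rw [mul_pow, ← Real.sqrt_inv, Real.sq_sqrt (by positivity)]
  simp_rw [hterm]
  rw [← Finset.mul_sum, Fin.sum_univ_eq_sum_range (fun i => if i % 2 = 0 then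
        (Real.cos (((i/2+1:ℕ):ℝ)*θ) - Real.cos (((i/2+1:ℕ):ℝ)*(θ+Real.pi)))^2
      else
        (Real.sin (((i/2+1:ℕ):ℝ)*θ) - Real.sin (((i/2+1:ℕ):ℝ)*(θ+Real.pi)))^2) (2*k),
    sum_t, ceil_half]
  field_simp
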